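/- For the Petersen graph P, the outer mutual-visibility number satisfies μ_o(P) = 4. -/

import Mathlib

namespace MutualVisibility

open SimpleGraph

variable {V W : Type*}

/-- `x` and `y` are `X`-visible in `G`: there is a shortest `x,y`-path all of whose
internal vertices avoid `X`. -/
def Visible (G : SimpleGraph V) (X : Set V) (x y : V) : Prop :=
  ∃ p : G.Walk x y, p.length = G.dist x y ∧ ∀ v ∈ p.support, v ≠ x → v ≠ y → v ∉ X

/-- `X` is a mutual-visibility set: any two vertices of `X` are `X`-visible. -/
def IsMutualVisSet (G : SimpleGraph V) (X : Set V) : Prop :=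
  ∀ x ∈ X, ∀ y ∈ X, Visible G X x y

/-- outer mutual-visibility set -/
def IsOuterMutualVisSet (G : SimpleGraph V) (X : Set V) : Prop :=
  IsMutualVisSet G X ∧ ∀ x ∈ X, ∀ y ∉ X, Visible G X x y

/-- dual mutual-visibility set -/
def IsDualMutualVisSet (G : SimpleGraph V) (X : Set V) : Prop :=
  IsMutualVisSet G X ∧ ∀ x ∉ X, ∀ y ∉ X, Visible G X x y

/-- total mutual-visibility set -/
def IsTotalMutualVisSet (G : SimpleGraph V) (X : Set V) : Prop :=
  ∀ x y : V, Visible G X x y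

/-- mutual-visibility number μ(G) -/
noncomputable def mu (G : SimpleGraph V) : ℕ :=
  sSup {k | ∃ X : Set V, IsMutualVisSet G X ∧ X.ncard = k}

/-- outer mutual-visibility number μ_o(G) -/
noncomputable def muOuter (G : SimpleGraph V) : ℕ :=
  sSup {k | ∃ X : Set V, IsOuterMutualVisSet G X ∧ X.ncard = k}

/-- dual mutual-visibility number μ_d(G) -/
noncomputable def muDual (G : SimpleGraph V) : ℕ :=
  sSup {k | ∃ X : Set V, IsDualMutualVisSet G X ∧ X.ncard = k}

/-- total mutual-visibility number μ_t(G) -/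
noncomputable def muTotal (G : SimpleGraph V) : ℕ :=
  sSup {k | ∃ X : Set V, IsTotalMutualVisSet G X ∧ X.ncard = k}

/-- `H` contains a subgraph copy of `F`. -/
def ContainsCopy (F : SimpleGraph W) (H : SimpleGraph V) : Prop :=
  ∃ f : W → V, Function.Injective f ∧ ∀ a b, F.Adj a b → H.Adj (f a) (f b)

/-- The Turán number ex(n; F): max number of edges of an `n`-vertex graph with no copy of `F`. -/
noncomputable def exNum (n : ℕ) (F : SimpleGraph W) : ℕ :=
  sSup {k | ∃ H : SimpleGraph (Fin n), ¬ ContainsCopy F H ∧ H.edgeSet.ncard = k}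

/-- The direct (tensor/categorical) product of graphs. -/
def directProd (G : SimpleGraph V) (H : SimpleGraph W) : SimpleGraph (V × W) where
  Adj x y := G.Adj x.1 y.1 ∧ H.Adj x.2 y.2
  symm.symm := fun _ _ h => ⟨h.1.symm, h.2.symm⟩
  loopless.irrefl := fun x h => G.loopless.irrefl x.1 h.1

/-- The join `G + H` of two graphs. -/
def graphJoin (G : SimpleGraph V) (H : SimpleGraph W) : SimpleGraph (V ⊕ W) where
  Adj u v := match u, v with
    | Sum.inl a, Sum.inl b => G.Adj a b
    | Sum.inr a, Sum.inr b => H.Adj a b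
    | _, _ => True
  symm.symm u v := match u, v with
    | Sum.inl _, Sum.inl _ => fun h => G.adj_symm h
    | Sum.inr _, Sum.inr _ => fun h => H.adj_symm h
    | Sum.inl _, Sum.inr _ => fun _ => trivial
    | Sum.inr _, Sum.inl _ => fun _ => trivial
  loopless.irrefl := fun u => match u with
    | Sum.inl a => G.loopless.irrefl a
    | Sum.inr a => H.loopless.irrefl a

/-- A big-μ graph: `G = (K_1 ∪ K_t) + H` for some `t ≥ 0` and some graph `H`. -/
def IsBigMu {V : Type} (G : SimpleGraph V) : Prop :=
  ∃ (t : ℕ) (W : Type) (H : SimpleGraph W),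
    Nonempty (G ≃g graphJoin ((⊤ : SimpleGraph (Fin 1)) ⊕g (⊤ : SimpleGraph (Fin t))) H)

/-- A cograph: a graph with no induced path on four vertices. -/
def IsCograph (G : SimpleGraph V) : Prop :=
  ¬ ∃ f : Fin 4 → V, Function.Injective f ∧
      ∀ a b, (pathGraph 4).Adj a b ↔ G.Adj (f a) (f b)

/-- The Petersen graph, realized as the Kneser graph K(5,2). -/
def petersen : SimpleGraph {s : Finset (Fin 5) // s.card = 2} where
  Adj a b := Disjoint a.1 b.1
  symm.symm := fun _ _ h => h.symm
  loopless.irrefl := by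
    rintro ⟨s, hs⟩ h
    rw [disjoint_self, Finset.bot_eq_empty] at h
    subst h
    simp at hs


/-! ### Auxiliary material for the Petersen graph computation -/

abbrev PV := {s : Finset (Fin 5) // s.card = 2}

instance : DecidableRel petersen.Adj := fun a b =>
  inferInstanceAs (Decidable (Disjoint a.1 b.1))

/-- Decidable characterization of visibility (used since Petersen has diameter 2). -/
def vd (X : Finset PV) (x y : PV) : Prop :=
  x = y ∨ petersen.Adj x y ∨
    (x ≠ y ∧ ¬ petersen.Adj x y ∧ ∃ z : PV, petersen.Adj x z ∧ petersen.Adj z y ∧ z ∉ X)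

instance (X : Finset PV) (x y : PV) : Decidable (vd X x y) := by
  unfold vd; infer_instance

lemma common_nbr : ∀ x y : PV, x ≠ y → ¬ petersen.Adj x y →
    ∃ z : PV, petersen.Adj x z ∧ petersen.Adj z y := by decide

lemma dist_two {x y : PV} (hne : x ≠ y) (hnadj : ¬ petersen.Adj x y) :
    petersen.dist x y = 2 := by
  obtain ⟨z, h1, h2⟩ := common_nbr x y hne hnadj
  have hle : petersen.dist x y ≤ 2 := by
    have := petersen.dist_le (Walk.cons h1 (Walk.cons h2 Walk.nil))
    simpa using this
  have h0 : 0 < petersen.dist x y :=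
    ((Walk.cons h1 (Walk.cons h2 Walk.nil)).reachable).pos_dist_of_ne hne
  have h1' : petersen.dist x y ≠ 1 := fun h => hnadj (dist_eq_one_iff_adj.mp h)
  omega

lemma visible_iff (X : Finset PV) (x y : PV) :
    Visible petersen (↑X) x y ↔ vd X x y := by
  constructor
  · rintro ⟨p, hlen, hsupp⟩
    by_cases hxy : x = y
    · exact Or.inl hxy
    by_cases hadj : petersen.Adj x y
    · exact Or.inr (Or.inl hadj)
    refine Or.inr (Or.inr ⟨hxy, hadj, ?_⟩)
    rw [dist_two hxy hadj] at hlen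
    have h1 : petersen.Adj x (p.getVert 1) := by
      have := p.adj_getVert_succ (i := 0) (by omega)
      simpa using this
    have h2 : petersen.Adj (p.getVert 1) y := by
      have := p.adj_getVert_succ (i := 1) (by omega)
      rw [show (1 + 1 : ℕ) = p.length from by omega, p.getVert_length] at this
      exact this
    refine ⟨p.getVert 1, h1, h2, ?_⟩
    have hz : p.getVert 1 ∈ p.support :=
      Walk.mem_support_iff_exists_getVert.mpr ⟨1, rfl, by omega⟩
    have := hsupp (p.getVert 1) hz
      (fun h => petersen.loopless.irrefl x (by rw [h] at h1; exact h1))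
      (fun h => petersen.loopless.irrefl y (by rw [h] at h2; exact h2))
    simpa using this
  · rintro (rfl | hadj | ⟨hne, hnadj, z, h1, h2, hzX⟩)
    · exact ⟨Walk.nil, by simp [SimpleGraph.dist_self], by simp⟩
    · refine ⟨Walk.cons hadj Walk.nil, ?_, ?_⟩
      · simp [dist_eq_one_iff_adj.mpr hadj]
      · intro v hv hvx hvy
        simp [Walk.support_cons] at hv
        rcases hv with rfl | rfl
        · exact absurd rfl hvx
        · exact absurd rfl hvy
    · refine ⟨Walk.cons h1 (Walk.cons h2 Walk.nil), ?_, ?_⟩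
      · simp [dist_two hne hnadj]
      · intro v hv hvx hvy
        simp [Walk.support_cons] at hv
        rcases hv with rfl | rfl | rfl
        · exact absurd rfl hvx
        · simpa using hzX
        · exact absurd rfl hvy

lemma outer_iff (X : Finset PV) :
    IsOuterMutualVisSet petersen (↑X) ↔ ∀ x ∈ X, ∀ y : PV, vd X x y := by
  constructor
  · rintro ⟨h1, h2⟩ x hx y
    by_cases hy : y ∈ X
    · exact (visible_iff X x y).mp (h1 x (by simpa using hx) y (by simpa using hy))
    · exact (visible_iff X x y).mp (h2 x (by simpa using hx) y (by simpa using hy))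
  · intro h
    exact ⟨fun x hx y _ => (visible_iff X x y).mpr (h x (by simpa using hx) y),
           fun x hx y _ => (visible_iff X x y).mpr (h x (by simpa using hx) y)⟩

lemma visible_anti {G : SimpleGraph V} {X Y : Set V} (hXY : X ⊆ Y) {x y : V}
    (h : Visible G Y x y) : Visible G X x y := by
  obtain ⟨p, hl, hs⟩ := h
  exact ⟨p, hl, fun v hv hx hy hvX => hs v hv hx hy (hXY hvX)⟩

lemma outer_subset {G : SimpleGraph V} {X Y : Set V} (hY : IsOuterMutualVisSet G Y)
    (hXY : X ⊆ Y) : IsOuterMutualVisSet G X := by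
  have key : ∀ x ∈ X, ∀ y : V, Visible G X x y := by
    intro x hx y
    by_cases hyY : y ∈ Y
    · exact visible_anti hXY (hY.1 x (hXY hx) y hyY)
    · exact visible_anti hXY (hY.2 x (hXY hx) y hyY)
  exact ⟨fun x hx y _ => key x hx y, fun x hx y _ => key x hx y⟩

def X4 : Finset PV :=
  {⟨{0, 1}, by decide⟩, ⟨{0, 2}, by decide⟩, ⟨{0, 3}, by decide⟩, ⟨{0, 4}, by decide⟩}

lemma X4_works : ∀ x ∈ X4, ∀ y : PV, vd X4 x y := by decide

lemma X4_card : X4.card = 4 := by decide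

lemma other_nbr : ∀ x y : PV, petersen.Adj x y → ∃ z : PV, petersen.Adj y z ∧ z ≠ x := by
  decide

lemma tri_free : ∀ a b c : PV, petersen.Adj a b → petersen.Adj b c → ¬ petersen.Adj a c := by
  decide

lemma unique_common : ∀ x z w w' : PV, x ≠ z → petersen.Adj x w → petersen.Adj w z →
    petersen.Adj x w' → petersen.Adj w' z → w = w' := by
  decide

set_option synthInstance.maxSize 2000 in
lemma no_indep_five : ∀ a b : PV, a ≠ b → ¬ petersen.Adj a b →
    ∀ c : PV, a ≠ c → ¬ petersen.Adj a c → b ≠ c → ¬ petersen.Adj b c →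
    ∀ d : PV, a ≠ d → ¬ petersen.Adj a d → b ≠ d → ¬ petersen.Adj b d →
      c ≠ d → ¬ petersen.Adj c d →
    ∀ e : PV, a ≠ e → ¬ petersen.Adj a e → b ≠ e → ¬ petersen.Adj b e →
      c ≠ e → ¬ petersen.Adj c e → d ≠ e → ¬ petersen.Adj d e → False := by
  decide

lemma outer_indep {X : Set PV} (hX : IsOuterMutualVisSet petersen X) :
    ∀ x ∈ X, ∀ y ∈ X, x ≠ y → ¬ petersen.Adj x y := by
  rintro x hx y hy _ hadj
  obtain ⟨z, hyz, hzx⟩ := other_nbr x y hadj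
  have hnadj : ¬ petersen.Adj x z := tri_free x y z hadj hyz
  have hxz : x ≠ z := Ne.symm hzx
  have hvis : Visible petersen X x z := by
    by_cases hz : z ∈ X
    · exact hX.1 x hx z hz
    · exact hX.2 x hx z hz
  obtain ⟨p, hlen, hsupp⟩ := hvis
  rw [dist_two hxz hnadj] at hlen
  have h1 : petersen.Adj x (p.getVert 1) := by
    have := p.adj_getVert_succ (i := 0) (by omega)
    simpa using this
  have h2 : petersen.Adj (p.getVert 1) z := by
    have := p.adj_getVert_succ (i := 1) (by omega)
    rw [show (1 + 1 : ℕ) = p.length from by omega, p.getVert_length] at this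
    exact this
  have hwy : p.getVert 1 = y :=
    unique_common x z (p.getVert 1) y hxz h1 h2 hadj hyz
  have hnot : p.getVert 1 ∉ X :=
    hsupp (p.getVert 1) (Walk.mem_support_iff_exists_getVert.mpr ⟨1, rfl, by omega⟩)
      (fun h => petersen.loopless.irrefl x (by rw [h] at h1; exact h1))
      (fun h => petersen.loopless.irrefl z (by rw [h] at h2; exact h2))
  exact hnot (hwy ▸ hy)

lemma indep_card_le (X : Finset PV)
    (h : ∀ x ∈ X, ∀ y ∈ X, x ≠ y → ¬ petersen.Adj x y) : X.card ≤ 4 := by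
  by_contra hc
  push_neg at hc
  obtain ⟨a, ha⟩ := Finset.card_pos.mp (show 0 < X.card by omega)
  have h1 : 4 ≤ (X.erase a).card := by
    rw [Finset.card_erase_of_mem ha]; omega
  obtain ⟨b, hb⟩ := Finset.card_pos.mp (show 0 < (X.erase a).card by omega)
  have h2 : 3 ≤ ((X.erase a).erase b).card := by
    rw [Finset.card_erase_of_mem hb]; omega
  obtain ⟨c, hc3⟩ := Finset.card_pos.mp (show 0 < ((X.erase a).erase b).card by omega)
  have h3 : 2 ≤ (((X.erase a).erase b).erase c).card := by
    rw [Finset.card_erase_of_mem hc3]; omega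
  obtain ⟨d, hd⟩ := Finset.card_pos.mp (show 0 < (((X.erase a).erase b).erase c).card by omega)
  have h4 : 1 ≤ ((((X.erase a).erase b).erase c).erase d).card := by
    rw [Finset.card_erase_of_mem hd]; omega
  obtain ⟨e, he⟩ :=
    Finset.card_pos.mp (show 0 < ((((X.erase a).erase b).erase c).erase d).card by omega)
  simp only [Finset.mem_erase] at hb hc3 hd he
  obtain ⟨hba, hbX⟩ := hb
  obtain ⟨hcb, hca, hcX⟩ := hc3
  obtain ⟨hdc, hdb, hda, hdX⟩ := hd
  obtain ⟨hed, hec, heb, hea, heX⟩ := he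
  exact no_indep_five a b (Ne.symm hba) (h a ha b hbX (Ne.symm hba))
    c (Ne.symm hca) (h a ha c hcX (Ne.symm hca)) (Ne.symm hcb) (h b hbX c hcX (Ne.symm hcb))
    d (Ne.symm hda) (h a ha d hdX (Ne.symm hda)) (Ne.symm hdb) (h b hbX d hdX (Ne.symm hdb))
    (Ne.symm hdc) (h c hcX d hdX (Ne.symm hdc))
    e (Ne.symm hea) (h a ha e heX (Ne.symm hea)) (Ne.symm heb) (h b hbX e heX (Ne.symm heb))
    (Ne.symm hec) (h c hcX e heX (Ne.symm hec)) (Ne.symm hed) (h d hdX e heX (Ne.symm hed))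

theorem muOuter_petersen : muOuter petersen = 4 := by
  have hmem : 4 ∈ {k | ∃ X : Set PV, IsOuterMutualVisSet petersen X ∧ X.ncard = 4} := by
    refine ⟨↑X4, (outer_iff X4).mpr X4_works, ?_⟩
    rw [Set.ncard_coe_finset, X4_card]
  have hub : ∀ k ∈ {k | ∃ X : Set PV, IsOuterMutualVisSet petersen X ∧ X.ncard = k}, k ≤ 4 := by
    rintro k ⟨X, hX, rfl⟩
    have hfin : X.Finite := Set.toFinite X
    rw [Set.ncard_eq_toFinset_card X hfin]
    apply indep_card_le
    intro x hx y hy hne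
    exact outer_indep hX x (hfin.mem_toFinset.mp hx) y (hfin.mem_toFinset.mp hy) hne
  refine le_antisymm (csSup_le ⟨4, hmem⟩ ?_) (le_csSup ⟨4, ?_⟩ hmem)
  · rintro k ⟨X, hX, rfl⟩
    exact hub _ ⟨X, hX, rfl⟩
  · rintro k ⟨X, hX, rfl⟩
    exact hub _ ⟨X, hX, rfl⟩
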